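/- Let ∂ be a Fox derivative in the group algebra A = R[π]. Then for all x, y ∈ π one has Δ_∂(xy) = Δ_∂(yx) in A. -/

import Mathlib

open MonoidAlgebra

/-- A Fox derivative in the group algebra `R[G]`: an `R`-linear map `∂` with
`∂(gh) = ∂(g) + g·∂(h)` for all `g, h ∈ G`. -/
def IsFoxDerivative {R : Type*} [CommRing R] {G : Type*} [Group G]
    (D : MonoidAlgebra R G →ₗ[R] MonoidAlgebra R G) : Prop :=
  ∀ g h : G, D (of R G (g * h)) = D (of R G g) + of R G g * D (of R G h)

/-- `Δ` is the `R`-linear map determined on the basis `G` by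
`Δ(x) = Σ_a (x/a)_∂ · a⁻¹ x a`, where `∂(x) = Σ_a (x/a)_∂ · a`. -/
def IsDeltaOf {R : Type*} [CommRing R] {G : Type*} [Group G]
    (D Δ : MonoidAlgebra R G →ₗ[R] MonoidAlgebra R G) : Prop :=
  ∀ g : G, Δ (of R G g) =
    Finsupp.sum (D (of R G g)).coeff fun a r => r • of R G (a⁻¹ * g * a)

private lemma sum_of_mul {R : Type*} [CommRing R] {G : Type*} [Group G]
    (f : MonoidAlgebra R G) (g c : G) :
    Finsupp.sum (of R G g * f).coeff (fun a r => r • of R G (a⁻¹ * c * a)) =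
      Finsupp.sum f.coeff (fun b s => s • of R G ((g * b)⁻¹ * c * (g * b))) := by
  induction f using MonoidAlgebra.induction with
  | zero => simp
  | single_add b s f hb hs ih =>
      rw [mul_add, coeff_add, Finsupp.sum_add_index', coeff_add, Finsupp.sum_add_index', ih]
      · congr 1
        have : of R G g * MonoidAlgebra.single b s =
            MonoidAlgebra.single (g * b) s := by
          simpa using MonoidAlgebra.single_mul_single (k := R) (a₁ := g) (b₁ := (1 : R))
            (a₂ := b) (b₂ := s)
        rw [this, coeff_single, Finsupp.sum_single_index, coeff_single, Finsupp.sum_single_index] <;> simp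
      all_goals intros <;> simp [add_smul]

theorem delta_comm {R : Type*} [CommRing R] {G : Type*} [Group G]
    (D Δ : MonoidAlgebra R G →ₗ[R] MonoidAlgebra R G)
    (hD : IsFoxDerivative D) (hΔ : IsDeltaOf D Δ) :
    ∀ x y : G, Δ (of R G (x * y)) = Δ (of R G (y * x)) := by
  intro x y
  rw [hΔ, hΔ, hD x y, hD y x, coeff_add, coeff_add, Finsupp.sum_add_index', Finsupp.sum_add_index',
    sum_of_mul, sum_of_mul]
  · rw [add_comm]
    congr 1
    · apply Finsupp.sum_congr
      intro b _
      congr 2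
      group
    · apply Finsupp.sum_congr
      intro a _
      congr 2
      group
  all_goals intros <;> simp [add_smul]
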